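/- Fix an integer g ≥ 1 and suppose I_i, V_i, I'_i, V'_i ∈ ℂ (i taken cyclically in {1,…,g+1}, i.e. modulo g+1) satisfy the discrete periodic Toda relations I'_i = I_i + V_i − V'_{i−1} and I'_i·V'_i = I_{i+1}·V_i for all i. Set a_i = I_{i+1} + V_i, b_i = I_i·V_i, and likewise a'_i, b'_i from the primed variables. Then for every nonzero y ∈ ℂ the Lax equation L'(y)·M(y) = M(y)·L(y) holds, where L(y) (resp. L'(y)) and M(y) are the (g+1)×(g+1) matrices defined below from (a_i,b_i) (resp. (a'_i,b'_i)) and (I_i). -/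

import Mathlib

/-- The Lax matrix `L(y)` of the `(g+1)`-periodic discrete Toda lattice
(indices are 0-based: position `(i,j)` here corresponds to `(i+1,j+1)` in 1-based
notation).  Diagonal entries are `a_i = I_{i+1} + V_i`, the superdiagonal entries
are `1`, the subdiagonal entries are `b_i = I_i·V_i`, with `(−1)^g·b_1/y` added
in position `(1,g+1)` and `(−1)^g·y` added in position `(g+1,1)`. -/
noncomputable def laxMatrix (g : ℕ) (I V : Fin (g + 1) → ℂ) (y : ℂ) :
    Matrix (Fin (g + 1)) (Fin (g + 1)) ℂ := fun i j =>
  (if j = i then I (i + 1) + V i else 0)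
  + (if (i : ℕ) + 1 = (j : ℕ) then 1 else 0)
  + (if (j : ℕ) + 1 = (i : ℕ) then I i * V i else 0)
  + (if (i : ℕ) = 0 ∧ (j : ℕ) = g then (-1) ^ g * (I 0 * V 0) / y else 0)
  + (if (i : ℕ) = g ∧ (j : ℕ) = 0 then (-1) ^ g * y else 0)

/-- The auxiliary matrix `M(y)`: diagonal entries `I_{i+1}` (cyclically, so the last
diagonal entry is `I_1`), superdiagonal entries `1`, and `(−1)^g·y` in position
`(g+1,1)`. -/
noncomputable def mMatrix (g : ℕ) (I : Fin (g + 1) → ℂ) (y : ℂ) :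
    Matrix (Fin (g + 1)) (Fin (g + 1)) ℂ := fun i j =>
  (if j = i then I (i + 1) else 0)
  + (if (i : ℕ) + 1 = (j : ℕ) then 1 else 0)
  + (if (i : ℕ) = g ∧ (j : ℕ) = 0 then (-1) ^ g * y else 0)


section Helpers

variable {g : ℕ} (I V : Fin (g+1) → ℂ) (y : ℂ) (i j : Fin (g+1))

private lemma lax_apply' : laxMatrix g I V y i j =
    (if (j : ℕ) = (i : ℕ) then I (i + 1) + V i else 0)
    + (if (i : ℕ) + 1 = (j : ℕ) then 1 else 0)
    + (if (j : ℕ) + 1 = (i : ℕ) then I i * V i else 0)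
    + (if (i : ℕ) = 0 ∧ (j : ℕ) = g then (-1) ^ g * (I 0 * V 0) / y else 0)
    + (if (i : ℕ) = g ∧ (j : ℕ) = 0 then (-1) ^ g * y else 0) := by
  simp only [laxMatrix, Fin.ext_iff]

private lemma lax_diag (hg : 1 ≤ g) (h : (j:ℕ) = (i:ℕ)) : laxMatrix g I V y i j = I (i + 1) + V i := by
  rw [lax_apply']
  split_ifs <;> first | ring1 | (exfalso; omega)

private lemma lax_super (h : (i:ℕ) + 1 = (j:ℕ)) (hc : ¬((i:ℕ) = 0 ∧ (j:ℕ) = g)) :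
    laxMatrix g I V y i j = 1 := by
  rw [lax_apply']
  have hj := j.isLt
  split_ifs <;> first | ring1 | (exfalso; omega) | tauto

private lemma lax_super_corner (hi : (i:ℕ) = 0) (hj : (j:ℕ) = g) (h3 : g = 1) :
    laxMatrix g I V y i j = 1 + (-1)^g * (I 0 * V 0) / y := by
  rw [lax_apply']
  split_ifs <;> first | ring1 | (exfalso; omega)

private lemma lax_sub (h : (j:ℕ) + 1 = (i:ℕ)) (hc : ¬((i:ℕ) = g ∧ (j:ℕ) = 0)) :
    laxMatrix g I V y i j = I i * V i := by
  rw [lax_apply']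
  have hi := i.isLt
  split_ifs <;> first | ring1 | (exfalso; omega) | tauto

private lemma lax_sub_corner (hi : (i:ℕ) = g) (hj : (j:ℕ) = 0) (h3 : g = 1) :
    laxMatrix g I V y i j = I i * V i + (-1)^g * y := by
  rw [lax_apply']
  split_ifs <;> first | ring1 | (exfalso; omega)

private lemma lax_tr (hi : (i:ℕ) = 0) (hj : (j:ℕ) = g) (h2 : 2 ≤ g) :
    laxMatrix g I V y i j = (-1)^g * (I 0 * V 0) / y := by
  rw [lax_apply']
  split_ifs <;> first | ring1 | (exfalso; omega)

private lemma lax_bl (hi : (i:ℕ) = g) (hj : (j:ℕ) = 0) (h2 : 2 ≤ g) :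
    laxMatrix g I V y i j = (-1)^g * y := by
  rw [lax_apply']
  split_ifs <;> first | ring1 | (exfalso; omega)

private lemma lax_zero (h1 : (j:ℕ) ≠ (i:ℕ)) (h2 : (i:ℕ) + 1 ≠ (j:ℕ)) (h3 : (j:ℕ) + 1 ≠ (i:ℕ))
    (h4 : ¬((i:ℕ) = 0 ∧ (j:ℕ) = g)) (h5 : ¬((i:ℕ) = g ∧ (j:ℕ) = 0)) :
    laxMatrix g I V y i j = 0 := by
  rw [lax_apply']
  split_ifs <;> first | ring1 | (exfalso; omega) | tauto

private lemma mul_m_apply (g : ℕ) (I : Fin (g+1) → ℂ) (y : ℂ)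
    (A : Matrix (Fin (g+1)) (Fin (g+1)) ℂ) (i j : Fin (g+1)) :
    (A * mMatrix g I y) i j = A i j * I (j + 1)
      + (if (j : ℕ) = 0 then (-1)^g * y * A i (Fin.last g) else A i (j - 1)) := by
  rw [Matrix.mul_apply]
  simp only [mMatrix, mul_add, Finset.sum_add_distrib, mul_ite, mul_one, mul_zero]
  have hA : (∑ k : Fin (g+1), if j = k then A i k * I (k+1) else 0) = A i j * I (j+1) := by
    rw [Finset.sum_ite_eq Finset.univ j (fun k => A i k * I (k+1))]; simp
  have hB : (∑ k : Fin (g+1), if (k:ℕ) + 1 = (j:ℕ) then A i k else 0)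
      = (if (j:ℕ) = 0 then 0 else A i (j - 1)) := by
    have e1 : ∀ k : Fin (g+1), ((k:ℕ) + 1 = (j:ℕ)) ↔ ((j:ℕ) ≠ 0 ∧ k = j - 1) := by
      intro k
      rw [Fin.ext_iff, Fin.coe_sub_one]
      have hj := j.isLt; have hk := k.isLt
      by_cases hj0 : j = 0
      · subst hj0; simp
      · have : ¬ ((j:ℕ) = 0) := by rw [Fin.ext_iff] at hj0; simpa using hj0
        simp [hj0, this]; omega
    simp only [e1, ite_and]
    by_cases hj : (j:ℕ) = 0
    · simp [hj]
    · simp only [ne_eq, hj, not_false_eq_true, if_true]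
      rw [Finset.sum_ite_eq' Finset.univ (j-1) (fun k => A i k)]
      simp [hj]
  have hC : (∑ k : Fin (g+1), if (k:ℕ) = g ∧ (j:ℕ) = 0 then A i k * ((-1)^g * y) else 0)
      = (if (j:ℕ) = 0 then (-1)^g * y * A i (Fin.last g) else 0) := by
    have e2 : ∀ k : Fin (g+1), ((k:ℕ) = g ∧ (j:ℕ) = 0) ↔ ((j:ℕ) = 0 ∧ k = Fin.last g) := by
      intro k; rw [Fin.ext_iff]; simp [Fin.last]; tauto
    simp only [e2, ite_and]
    by_cases hj : (j:ℕ) = 0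
    · simp only [hj, if_true]
      rw [Finset.sum_ite_eq' Finset.univ (Fin.last g) (fun k => A i k * ((-1)^g * y))]
      simp [mul_comm]
    · simp [hj]
  rw [hA, hB, hC]
  by_cases hj : (j:ℕ) = 0 <;> simp [hj]

private lemma m_mul_apply (g : ℕ) (I : Fin (g+1) → ℂ) (y : ℂ)
    (A : Matrix (Fin (g+1)) (Fin (g+1)) ℂ) (i j : Fin (g+1)) :
    (mMatrix g I y * A) i j = I (i + 1) * A i j
      + (if (i : ℕ) = g then (-1)^g * y * A 0 j else A (i + 1) j) := by
  rw [Matrix.mul_apply]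
  simp only [mMatrix, add_mul, Finset.sum_add_distrib, ite_mul, one_mul, zero_mul]
  have hA : (∑ k : Fin (g+1), if k = i then I (i+1) * A k j else 0) = I (i+1) * A i j := by
    rw [Finset.sum_ite_eq' Finset.univ i (fun k => I (i+1) * A k j)]; simp
  have hB : (∑ k : Fin (g+1), if (i:ℕ) + 1 = (k:ℕ) then A k j else 0)
      = (if (i:ℕ) = g then 0 else A (i+1) j) := by
    have e1 : ∀ k : Fin (g+1), ((i:ℕ) + 1 = (k:ℕ)) ↔ ((i:ℕ) ≠ g ∧ k = i + 1) := by
      intro k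
      rw [Fin.ext_iff, Fin.val_add_one]
      have hj := i.isLt; have hk := k.isLt
      by_cases hi0 : i = Fin.last g
      · have : (i:ℕ) = g := by rw [hi0]; simp [Fin.last]
        simp [hi0, this]; omega
      · have : ¬ ((i:ℕ) = g) := by
          intro h; apply hi0; rw [Fin.ext_iff]; simpa [Fin.last] using h
        simp [hi0, this]; omega
    simp only [e1, ite_and]
    by_cases hi : (i:ℕ) = g
    · simp [hi]
    · simp only [ne_eq, hi, not_false_eq_true, if_true]
      rw [Finset.sum_ite_eq' Finset.univ (i+1) (fun k => A k j)]
      simp [hi]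
  have hC : (∑ k : Fin (g+1), if (i:ℕ) = g ∧ (k:ℕ) = 0 then (-1)^g * y * A k j else 0)
      = (if (i:ℕ) = g then (-1)^g * y * A 0 j else 0) := by
    have e2 : ∀ k : Fin (g+1), ((i:ℕ) = g ∧ (k:ℕ) = 0) ↔ ((i:ℕ) = g ∧ k = 0) := by
      intro k; rw [Fin.ext_iff]; simp
    simp only [e2, ite_and]
    by_cases hi : (i:ℕ) = g
    · simp only [hi, if_true]
      rw [Finset.sum_ite_eq' Finset.univ (0 : Fin (g+1)) (fun k => (-1)^g * y * A k j)]
      simp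
    · simp [hi]
  rw [hA, hB, hC]
  by_cases hi : (i:ℕ) = g <;> simp [hi]

end Helpers

/-- If `(I,V)` and `(I',V')` satisfy the discrete periodic Toda relations
`I'_i = I_i + V_i − V'_{i−1}` and `I'_i·V'_i = I_{i+1}·V_i` (indices mod `g+1`),
then the Lax equation `L'(y)·M(y) = M(y)·L(y)` holds for every `y ≠ 0`. -/
theorem dToda_lax_equation (g : ℕ) (hg : 1 ≤ g) (I V I' V' : Fin (g + 1) → ℂ)
    (h1 : ∀ i : Fin (g + 1), I' i = I i + V i - V' (i - 1))
    (h2 : ∀ i : Fin (g + 1), I' i * V' i = I (i + 1) * V i)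
    (y : ℂ) (hy : y ≠ 0) :
    laxMatrix g I' V' y * mMatrix g I y = mMatrix g I y * laxMatrix g I V y := by
  have h1' : ∀ k : Fin (g+1), I' (k+1) = I (k+1) + V (k+1) - V' k := by
    intro k; have := h1 (k+1); rwa [add_sub_cancel_right] at this
  have hE : ((-1:ℂ))^g * (-1)^g = 1 := by
    rw [← pow_add]; exact Even.neg_one_pow ⟨g, rfl⟩
  have hcan : ∀ X : ℂ, (-1:ℂ)^g * y * ((-1)^g * X / y) = X := by
    intro X
    field_simp
    linear_combination X * hE
  have hcan2 : ∀ X : ℂ, (-1:ℂ)^g * y * (1 + (-1)^g * X / y) = (-1)^g * y + X := by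
    intro X
    rw [mul_add, mul_one, hcan]
  ext i j
  rw [mul_m_apply, m_mul_apply]
  have hp := i.isLt
  have hq := j.isLt
  by_cases hq0 : (j:ℕ) = 0 <;> by_cases hpg : (i:ℕ) = g
  · -- Branch D : q = 0, p = g
    rw [if_pos hq0, if_pos hpg]
    have hj0 : j = 0 := by rw [Fin.ext_iff]; simpa using hq0
    subst hj0
    have hil : i = Fin.last g := by rw [Fin.ext_iff]; simp [Fin.last] <;> omega
    have hi10 : i + 1 = 0 := by rw [hil, Fin.last_add_one]
    have hsub : (0:Fin (g+1)) - 1 = i := by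
      rw [Fin.ext_iff, Fin.coe_sub_one, if_pos rfl]; omega
    have h10 : I' 0 = I 0 + V 0 - V' i := by have := h1 0; rwa [hsub] at this
    have h2i : I' i * V' i = I 0 * V i := by have := h2 i; rwa [hi10] at this
    by_cases hgg : g = 1
    · rw [lax_sub_corner I' V' y i 0 hpg rfl hgg,
         lax_diag I' V' y i (Fin.last g) hg (by simp [Fin.last] <;> omega),
         lax_sub_corner I V y i 0 hpg rfl hgg,
         lax_diag I V y 0 0 hg rfl, hi10]
      have hi01 : (0:Fin (g+1)) + 1 = i := by
        rw [Fin.ext_iff, Fin.val_add_one, if_neg (by rw [Fin.ext_iff]; simp [Fin.last] <;> omega)]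
        simp <;> omega
      rw [hi01]
      linear_combination I i * h2i + (-1)^g * y * h10
    · have hg2 : 2 ≤ g := by omega
      rw [lax_bl I' V' y i 0 hpg rfl hg2,
         lax_diag I' V' y i (Fin.last g) hg (by simp [Fin.last] <;> omega),
         lax_bl I V y i 0 hpg rfl hg2,
         lax_diag I V y 0 0 hg rfl, hi10]
      linear_combination ((-1)^g * y) * h10
  · -- Branch B : q = 0, p ≠ g
    rw [if_pos hq0, if_neg hpg]
    have hj0 : j = 0 := by rw [Fin.ext_iff]; simpa using hq0
    subst hj0
    have hine : ¬ i = Fin.last g := by rw [Fin.ext_iff]; simp [Fin.last] <;> omega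
    have hip : ((i + 1 : Fin (g+1)) : ℕ) = (i:ℕ) + 1 := by rw [Fin.val_add_one, if_neg hine]
    by_cases hp0 : (i:ℕ) = 0
    · -- B1 : p = q = 0
      have hi0 : i = 0 := by rw [Fin.ext_iff]; simpa using hp0
      subst hi0
      by_cases hgg : g = 1
      · rw [lax_diag I' V' y 0 0 hg rfl,
           lax_super_corner I' V' y 0 (Fin.last g) rfl (by simp [Fin.last]) hgg,
           lax_diag I V y 0 0 hg rfl,
           lax_sub_corner I V y (0+1) 0 (by rw [hip, Fin.val_zero]; omega) rfl hgg,
           hcan2 (I' 0 * V' 0)]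
        linear_combination I (0+1) * h1' 0 + h2 0
      · have hg2 : 2 ≤ g := by omega
        rw [lax_diag I' V' y 0 0 hg rfl,
           lax_tr I' V' y 0 (Fin.last g) rfl (by simp [Fin.last]) hg2,
           lax_diag I V y 0 0 hg rfl,
           lax_sub I V y (0+1) 0 (by rw [hip, Fin.val_zero]) (by rw [hip, Fin.val_zero]; omega),
           hcan (I' 0 * V' 0)]
        linear_combination I (0+1) * h1' 0 + h2 0
    · by_cases hp1 : (i:ℕ) = 1
      · -- B2 : p = 1, q = 0
        have hji : (0 : Fin (g+1)) + 1 = i := by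
          rw [Fin.ext_iff, Fin.val_add_one, if_neg (by rw [Fin.ext_iff]; simp [Fin.last] <;> omega)]
          simp <;> omega
        rw [lax_sub I' V' y i 0 (by simp <;> omega) (by simp <;> omega),
           lax_sub I V y i 0 (by simp <;> omega) (by simp <;> omega), ← hji]
        by_cases hgg : g = 2
        · rw [lax_super I' V' y (0+1) (Fin.last g) (by rw [hji, hp1]; simp [Fin.last] <;> omega)
              (by rw [hji]; simp [Fin.last] <;> omega),
             lax_bl I V y ((0+1)+1) 0 (by rw [hji, hip]; omega) rfl (by omega)]
          linear_combination I (0+1) * h2 (0+1)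
        · rw [lax_zero I' V' y (0+1) (Fin.last g) (by rw [hji]; simp [Fin.last] <;> omega)
              (by rw [hji]; simp [Fin.last] <;> omega) (by rw [hji]; simp [Fin.last] <;> omega)
              (by rw [hji]; simp [Fin.last] <;> omega) (by rw [hji]; simp [Fin.last] <;> omega),
             lax_zero I V y ((0+1)+1) 0 (by rw [hji, hip]; simp <;> omega)
              (by rw [hji, hip]; simp) (by rw [hji, hip]; simp <;> omega)
              (by rw [hji, hip]; simp <;> omega) (by rw [hji, hip]; simp <;> omega)]
          linear_combination I (0+1) * h2 (0+1)
      · -- B3 : 2 ≤ p ≤ g-1, q = 0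
        rw [lax_zero I' V' y i 0 (by simp <;> omega) (by simp <;> omega) (by simp <;> omega)
            (by simp <;> omega) (by simp <;> omega),
           lax_zero I V y i 0 (by simp <;> omega) (by simp <;> omega) (by simp <;> omega)
            (by simp <;> omega) (by simp <;> omega)]
        by_cases hpe : (i:ℕ) + 1 = g
        · rw [lax_super I' V' y i (Fin.last g) (by simp [Fin.last] <;> omega)
              (by simp [Fin.last] <;> omega),
             lax_bl I V y (i+1) 0 (by rw [hip]; omega) rfl (by omega)]
          ring1
        · rw [lax_zero I' V' y i (Fin.last g) (by simp [Fin.last] <;> omega)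
              (by simp [Fin.last] <;> omega) (by simp [Fin.last] <;> omega)
              (by simp [Fin.last] <;> omega) (by simp [Fin.last] <;> omega),
             lax_zero I V y (i+1) 0 (by rw [hip]; simp <;> omega) (by rw [hip]; simp <;> omega)
              (by rw [hip]; simp <;> omega) (by rw [hip]; simp <;> omega) (by rw [hip]; simp <;> omega)]
          ring1
  · -- Branch C : q ≠ 0, p = g
    rw [if_neg hq0, if_pos hpg]
    have hjne : ¬ j = 0 := by rw [Fin.ext_iff]; simpa using hq0
    have hjm : ((j - 1 : Fin (g+1)) : ℕ) = (j:ℕ) - 1 := by rw [Fin.coe_sub_one, if_neg hjne]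
    have hil : i = Fin.last g := by rw [Fin.ext_iff]; simp [Fin.last] <;> omega
    have hi10 : i + 1 = 0 := by rw [hil, Fin.last_add_one]
    have hsub : (0:Fin (g+1)) - 1 = i := by
      rw [Fin.ext_iff, Fin.coe_sub_one, if_pos rfl]; omega
    have h10 : I' 0 = I 0 + V 0 - V' i := by have := h1 0; rwa [hsub] at this
    have h2i : I' i * V' i = I 0 * V i := by have := h2 i; rwa [hi10] at this
    by_cases hd : (j:ℕ) = (i:ℕ)
    · -- C1 : q = p = g
      have hji : j = i := by rw [Fin.ext_iff]; omega
      subst hji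
      rw [lax_diag I' V' y j j hg rfl, lax_diag I V y j j hg rfl, hi10]
      by_cases hgg : g = 1
      · rw [lax_sub_corner I' V' y j (j-1) hpg (by omega) hgg,
           lax_super_corner I V y 0 j rfl (by omega) hgg,
           hcan2 (I 0 * V 0)]
        linear_combination I 0 * h10 + h2i
      · have hg2 : 2 ≤ g := by omega
        rw [lax_sub I' V' y j (j-1) (by omega) (by omega),
           lax_tr I V y 0 j rfl (by omega) hg2,
           hcan (I 0 * V 0)]
        linear_combination I 0 * h10 + h2i
    · by_cases hb : (j:ℕ) + 1 = (i:ℕ)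
      · -- C2 : q = g - 1
        have hg2 : 2 ≤ g := by omega
        have hjl : ¬ j = Fin.last g := by rw [Fin.ext_iff]; simp [Fin.last] <;> omega
        have hji : j + 1 = i := by
          rw [Fin.ext_iff, Fin.val_add_one, if_neg hjl]; omega
        rw [lax_sub I' V' y i j hb (by omega), lax_sub I V y i j hb (by omega), hji, hi10]
        by_cases hgg : g = 2
        · rw [lax_bl I' V' y i (j-1) hpg (by omega) hg2,
             lax_super I V y 0 j (by simp <;> omega) (by simp <;> omega)]
          linear_combination I i * h2i
        · rw [lax_zero I' V' y i (j-1) (by omega) (by omega) (by omega) (by omega) (by omega),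
             lax_zero I V y 0 j (by simp <;> omega) (by simp <;> omega) (by simp <;> omega)
              (by simp <;> omega) (by simp <;> omega)]
          linear_combination I i * h2i
      · -- C3/C4 : 1 ≤ q ≤ g-2
        rw [lax_zero I' V' y i j (by omega) (by omega) (by omega) (by omega) (by omega),
           lax_zero I V y i j (by omega) (by omega) (by omega) (by omega) (by omega), hi10]
        by_cases hq1 : (j:ℕ) = 1
        · rw [lax_bl I' V' y i (j-1) hpg (by omega) (by omega),
             lax_super I V y 0 j (by simp <;> omega) (by simp <;> omega)]
          ring1
        · rw [lax_zero I' V' y i (j-1) (by omega) (by omega) (by omega) (by omega) (by omega),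
             lax_zero I V y 0 j (by simp <;> omega) (by simp <;> omega) (by simp <;> omega)
              (by simp <;> omega) (by simp <;> omega)]
          ring1
  · -- Branch A : q ≠ 0, p ≠ g
    rw [if_neg hq0, if_neg hpg]
    have hjne : ¬ j = 0 := by rw [Fin.ext_iff]; simpa using hq0
    have hjm : ((j - 1 : Fin (g+1)) : ℕ) = (j:ℕ) - 1 := by rw [Fin.coe_sub_one, if_neg hjne]
    have hine : ¬ i = Fin.last g := by rw [Fin.ext_iff]; simp [Fin.last] <;> omega
    have hip : ((i + 1 : Fin (g+1)) : ℕ) = (i:ℕ) + 1 := by rw [Fin.val_add_one, if_neg hine]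
    by_cases hd : (j:ℕ) = (i:ℕ)
    · -- A1 : diagonal
      have hji : j = i := by rw [Fin.ext_iff]; omega
      subst hji
      rw [lax_diag I' V' y j j hg rfl,
         lax_sub I' V' y j (j-1) (by omega) (by omega),
         lax_diag I V y j j hg rfl,
         lax_sub I V y (j+1) j (by rw [hip]) (by rw [hip]; omega)]
      linear_combination I (j+1) * h1' j + h2 j
    · by_cases hs : (i:ℕ) + 1 = (j:ℕ)
      · -- A2 : superdiagonal
        have hji : j = i + 1 := by rw [Fin.ext_iff, hip]; omega
        subst hji
        by_cases hcor : (i:ℕ) = 0 ∧ ((i+1 : Fin (g+1)):ℕ) = g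
        · -- A2b : g = 1 corner
          have hgg : g = 1 := by rw [hip] at hcor; omega
          subst hgg
          have hi0 : i = 0 := by rw [Fin.ext_iff]; simp <;> omega
          subst hi0
          rw [lax_super_corner I' V' y 0 (0+1) hcor.1 hcor.2 rfl, add_sub_cancel_right,
             lax_diag I' V' y 0 0 hg rfl,
             lax_super_corner I V y 0 (0+1) hcor.1 hcor.2 rfl,
             lax_diag I V y (0+1) (0+1) hg rfl,
             show ((0:Fin (1+1)) + 1 + 1) = 0 by decide]
          linear_combination h1' 0 + ((-1:ℂ)^1 * I 0 / y) * h2 0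
        · -- A2a
          rw [lax_super I' V' y i (i+1) (by rw [hip]) hcor, add_sub_cancel_right,
             lax_diag I' V' y i i hg rfl,
             lax_super I V y i (i+1) (by rw [hip]) hcor,
             lax_diag I V y (i+1) (i+1) hg rfl]
          linear_combination h1' i
      · by_cases hb : (j:ℕ) + 1 = (i:ℕ)
        · -- A3 : subdiagonal
          have hjl : ¬ j = Fin.last g := by rw [Fin.ext_iff]; simp [Fin.last] <;> omega
          have hji : j + 1 = i := by
            rw [Fin.ext_iff, Fin.val_add_one, if_neg hjl]; omega
          rw [lax_sub I' V' y i j hb (by omega),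
             lax_zero I' V' y i (j-1) (by omega) (by omega) (by omega) (by omega) (by omega),
             lax_sub I V y i j hb (by omega),
             lax_zero I V y (i+1) j (by rw [hip]; omega) (by rw [hip]; omega)
              (by rw [hip]; omega) (by rw [hip]; omega) (by rw [hip]; omega), hji]
          linear_combination I i * h2 i
        · by_cases hcor : (i:ℕ) = 0 ∧ (j:ℕ) = g
          · -- A4 : top-right corner, g ≥ 2
            have hg2 : 2 ≤ g := by omega
            have hi0 : i = 0 := by rw [Fin.ext_iff, Fin.val_zero]; omega
            subst hi0
            have hjl : j = Fin.last g := by rw [Fin.ext_iff]; simp [Fin.last] <;> omega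
            rw [lax_tr I' V' y 0 j rfl hcor.2 hg2, lax_tr I V y 0 j rfl hcor.2 hg2,
               hjl, Fin.last_add_one]
            by_cases hgg : g = 2
            · rw [lax_super I' V' y 0 (Fin.last g - 1) (by rw [hjl] at hjm; rw [hjm]; simp [Fin.last] <;> omega)
                  (by rw [hjl] at hjm; rw [hjm]; simp [Fin.last] <;> omega),
                 lax_super I V y (0+1) (Fin.last g) (by rw [hip]; simp [Fin.last] <;> omega)
                  (by rw [hip]; simp [Fin.last] <;> omega)]
              linear_combination ((-1)^g * I 0 / y) * h2 0
            · rw [lax_zero I' V' y 0 (Fin.last g - 1) (by rw [hjl] at hjm; rw [hjm]; simp [Fin.last] <;> omega)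
                  (by rw [hjl] at hjm; rw [hjm]; simp [Fin.last] <;> omega)
                  (by rw [hjl] at hjm; rw [hjm]; simp [Fin.last] <;> omega)
                  (by rw [hjl] at hjm; rw [hjm]; simp [Fin.last] <;> omega)
                  (by rw [hjl] at hjm; rw [hjm]; simp [Fin.last] <;> omega),
                 lax_zero I V y (0+1) (Fin.last g) (by rw [hip]; simp [Fin.last] <;> omega)
                  (by rw [hip]; simp [Fin.last] <;> omega) (by rw [hip]; simp [Fin.last] <;> omega)
                  (by rw [hip]; simp [Fin.last] <;> omega) (by rw [hip]; simp [Fin.last] <;> omega)]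
              linear_combination ((-1)^g * I 0 / y) * h2 0
          · -- A5 : generic zero entry
            rw [lax_zero I' V' y i j (by omega) (by omega) (by omega) (by omega) (by omega),
               lax_zero I V y i j (by omega) (by omega) (by omega) (by omega) (by omega)]
            by_cases hq2 : (i:ℕ) + 2 = (j:ℕ)
            · rw [lax_super I' V' y i (j-1) (by omega) (by omega),
                 lax_super I V y (i+1) j (by rw [hip]; omega) (by rw [hip]; omega)]
              ring1
            · rw [lax_zero I' V' y i (j-1) (by omega) (by omega) (by omega) (by omega) (by omega),
                 lax_zero I V y (i+1) j (by rw [hip]; omega) (by rw [hip]; omega)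
                  (by rw [hip]; omega) (by rw [hip]; omega) (by rw [hip]; omega)]
              ring1
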